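/- arXiv:1112.0832 — 6 statements merged into one kernel-verified Lean document; each statement's English description precedes it below -/
import Mathlib

section
/- Let M be a closed (compact, boundaryless) 7-manifold with a closed G₂-structure φ, and let X be a vector field on M. Then the 2-form X ⌟ φ is exact if and only if X is the zero vector field. Consequently, there are no nontrivial Rochesterian vector fields on a closed manifold with closed G₂-structure. -/
/-!
Since Mathlib does not yet provide differential forms, exterior derivatives, interior
products or Lie derivatives on smooth manifolds, we axiomatize a smooth manifold together
with its Cartan calculus as a structure `DGCtx`: it records the points of the manifold,
the smooth vector fields (a Lie algebra), the smooth differential `k`-forms, the exterior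
derivative `d`, the interior product `ι`, and the standard identities relating them
(Cartan's magic formula is used to express the Lie derivative).
-/

/-- An abstract smooth manifold together with its Cartan calculus. -/
structure DGCtx : Type 1 where
  /-- the points of the manifold `M` -/
  Pt : Type
  /-- the smooth vector fields on `M`, a Lie algebra over `ℝ` -/
  VF : Type
  /-- the smooth differential `k`-forms on `M`; `Form 0 = C^∞(M)` -/
  Form : ℕ → Type
  [instVFLieRing : LieRing VF]
  [instVFLieAlg : LieAlgebra ℝ VF]
  [instFormAddCommGroup : ∀ k, AddCommGroup (Form k)]
  [instFormModule : ∀ k, Module ℝ (Form k)]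
  /-- evaluation of a smooth function at a point -/
  eval : Form 0 → Pt → ℝ
  eval_injective : Function.Injective eval
  eval_zero : ∀ p : Pt, eval 0 p = 0
  /-- the exterior derivative -/
  d : ∀ {k : ℕ}, Form k → Form (k + 1)
  d_add : ∀ {k : ℕ} (α β : Form k), d (α + β) = d α + d β
  d_smul : ∀ {k : ℕ} (c : ℝ) (α : Form k), d (c • α) = c • d α
  d_d : ∀ {k : ℕ} (α : Form k), d (d α) = 0
  /-- the interior product (contraction) `ι X α = X ⌟ α` -/
  ι : ∀ {k : ℕ}, VF → Form (k + 1) → Form k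
  ι_add : ∀ {k : ℕ} (X : VF) (α β : Form (k + 1)), ι X (α + β) = ι X α + ι X β
  ι_smul : ∀ {k : ℕ} (c : ℝ) (X : VF) (α : Form (k + 1)), ι X (c • α) = c • ι X α
  ι_add_vf : ∀ {k : ℕ} (X Y : VF) (α : Form (k + 1)), ι (X + Y) α = ι X α + ι Y α
  ι_smul_vf : ∀ {k : ℕ} (c : ℝ) (X : VF) (α : Form (k + 1)), ι (c • X) α = c • ι X α
  ι_antisymm : ∀ {k : ℕ} (X Y : VF) (α : Form (k + 2)), ι X (ι Y α) = - ι Y (ι X α)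
  /-- vector fields are determined by their derivations on smooth functions -/
  vf_ext : ∀ X Y : VF, (∀ f : Form 0, ι X (d f) = ι Y (d f)) → X = Y
  /-- `ι_{[X,Y]} = L_X ∘ ι_Y - ι_Y ∘ L_X`, the Lie derivative being expressed by
  Cartan's magic formula `L_X = d ∘ ι_X + ι_X ∘ d`. -/
  ι_bracket : ∀ {k : ℕ} (X Y : VF) (α : Form (k + 2)),
    ι ⁅X, Y⁆ α = (d (ι X (ι Y α)) + ι X (d (ι Y α))) - ι Y (d (ι X α) + ι X (d α))
  /-- the same identity one degree lower, where `ι_Y α` is a function and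
  `L_X` acts on functions as `ι_X ∘ d`. -/
  ι_bracket₀ : ∀ (X Y : VF) (α : Form 1),
    ι ⁅X, Y⁆ α = ι X (d (ι Y α)) - ι Y (d (ι X α) + ι X (d α))

attribute [instance] DGCtx.instVFLieRing DGCtx.instVFLieAlg
  DGCtx.instFormAddCommGroup DGCtx.instFormModule

namespace DGCtx

variable (C : DGCtx)

/-- The Lie derivative `L_X` on `(k+1)`-forms, via Cartan's magic formula. -/
def lieD {k : ℕ} (X : C.VF) (α : C.Form (k + 1)) : C.Form (k + 1) :=
  C.d (C.ι X α) + C.ι X (C.d α)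

/-- The Lie derivative `L_X` on smooth functions. -/
def lieF (X : C.VF) (f : C.Form 0) : C.Form 0 := C.ι X (C.d f)

end DGCtx

/-- A symplectic structure on the manifold `C`: a closed nondegenerate 2-form.
(Nondegeneracy is recorded through its consequence that contraction with `ω` is an
injective map from vector fields to 1-forms.) -/
structure SymplData (C : DGCtx) where
  /-- the symplectic form -/
  ω : C.Form 2
  closed : C.d ω = 0
  nondeg : ∀ X Y : C.VF, C.ι X ω = C.ι Y ω → X = Y

namespace SymplData

variable {C : DGCtx} (S : SymplData C)

/-- A vector field is symplectic if its flow preserves `ω`, i.e. `L_X ω = 0`. -/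
def IsSympVF (X : C.VF) : Prop := C.lieD (k := 1) X S.ω = 0

/-- A vector field is Hamiltonian if `X ⌟ ω = d H` for some smooth function `H`. -/
def IsHamVF (X : C.VF) : Prop := ∃ H : C.Form 0, C.ι X S.ω = C.d H

end SymplData

/-- A symplectic structure together with the assignment `f ↦ X_f` of the (unique, by
nondegeneracy) Hamiltonian vector field of each smooth function; these exist on any
symplectic manifold since `ω` induces an isomorphism between vector fields and 1-forms.
`ham_span` records that Hamiltonian vector fields span each tangent space. -/
structure HamSympl (C : DGCtx) extends SymplData C where
  /-- the Hamiltonian vector field `X_f` of a smooth function `f` -/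
  ham : C.Form 0 → C.VF
  ham_spec : ∀ f : C.Form 0, C.ι (ham f) ω = C.d f
  ham_span : ∀ β : C.Form 2, (∀ f : C.Form 0, C.ι (ham f) β = 0) → β = 0

namespace HamSympl

variable {C : DGCtx} (S : HamSympl C)

/-- The Poisson bracket `{f, g} = ω(X_f, X_g)`. -/
def pb (f g : C.Form 0) : C.Form 0 := C.ι (S.ham g) (C.ι (S.ham f) S.ω)

end HamSympl

/-- A `G₂`-structure on the 7-manifold `C`: the fundamental (nondegenerate) 3-form `φ`.
(Nondegeneracy is recorded through its consequence that contraction with `φ` is an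
injective map from vector fields to 2-forms.) -/
structure G2Data (C : DGCtx) where
  /-- the fundamental 3-form of the `G₂`-structure -/
  φ : C.Form 3
  nondeg : ∀ X Y : C.VF, C.ι X φ = C.ι Y φ → X = Y

namespace G2Data

variable {C : DGCtx} (G : G2Data C)

/-- `Ω²₇(M) = {X ⌟ φ : X a vector field}`, the 7-dimensional component of the 2-forms. -/
def Omega27 : Set (C.Form 2) := Set.range fun X : C.VF => C.ι X G.φ

/-- A `G₂`-vector field: one whose flow preserves `φ`, i.e. `L_X φ = 0`. -/
def IsG2VF (X : C.VF) : Prop := C.lieD (k := 2) X G.φ = 0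

/-- A Rochesterian vector field: `X ⌟ φ = d α` for some 1-form `α` (such an `α` is
automatically a Rochesterian 1-form since `d α = X ⌟ φ ∈ Ω²₇`). -/
def IsRocVF (X : C.VF) : Prop := ∃ α : C.Form 1, C.ι X G.φ = C.d α

/-- A Rochesterian 1-form: a 1-form `α` with `d α ∈ Ω²₇(M)`. -/
def IsRoc1 (α : C.Form 1) : Prop := C.d α ∈ G.Omega27

/-- The Rochesterian vector field `X_α` of a Rochesterian 1-form `α`: the unique (by
nondegeneracy) vector field with `X_α ⌟ φ = d α`; junk value `0` otherwise. -/
noncomputable def rvf (α : C.Form 1) : C.VF :=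
  letI := Classical.propDecidable (∃ X : C.VF, C.ι X G.φ = C.d α)
  if h : ∃ X : C.VF, C.ι X G.φ = C.d α then h.choose else 0

/-- The bracket `{α, β} = φ(X_α, X_β, ·)` on Rochesterian 1-forms. -/
noncomputable def rbr (α β : C.Form 1) : C.Form 1 :=
  C.ι (G.rvf β) (C.ι (G.rvf α) G.φ)

end G2Data

/-- The pullback data of a smooth map `ψ : C → D`: pullback of forms, commuting
with `d` and `ℝ`-linear. -/
structure SmoothPull (C D : DGCtx) where
  /-- pullback of forms, `ψ^*` -/
  pull : ∀ {k : ℕ}, D.Form k → C.Form k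
  pull_add : ∀ {k : ℕ} (α β : D.Form k), pull (α + β) = pull α + pull β
  pull_smul : ∀ {k : ℕ} (c : ℝ) (α : D.Form k), pull (c • α) = c • pull α
  pull_d : ∀ {k : ℕ} (α : D.Form k), pull (D.d α) = C.d (pull α)

/-- The pullback data of a diffeomorphism `ψ : C → D`: in addition to the pullback of
forms, vector fields pull back by `X ↦ dψ⁻¹ ∘ X ∘ ψ`, pullbacks are bijective, and the
pullback is compatible with the interior product: `ψ^*(X ⌟ α) = (ψ^* X) ⌟ (ψ^* α)`. -/
structure DiffeoPull (C D : DGCtx) extends SmoothPull C D where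
  /-- pullback of vector fields under the diffeomorphism, `X ↦ dψ⁻¹ ∘ X ∘ ψ` -/
  pullVF : D.VF → C.VF
  pullVF_bijective : Function.Bijective pullVF
  pull_bijective : ∀ k : ℕ, Function.Bijective fun α : D.Form k => pull α
  pull_ι : ∀ {k : ℕ} (X : D.VF) (α : D.Form (k + 1)),
    pull (D.ι X α) = C.ι (pullVF X) (pull α)

/-- A closed (compact, boundaryless) 7-manifold with `G₂`-structure `φ`: in addition to
the `G₂` 3-form we record the wedge product (in the degrees needed), the induced metric
`⟨·,·⟩_φ` and volume form via `(X ⌟ φ) ∧ (Y ⌟ φ) ∧ φ = 6 ⟨X,Y⟩_φ dvol_φ`, and integration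
of 7-forms, for which Stokes' theorem `∫_M dη = ∫_{∂M} η = 0` holds since `∂M = ∅`. -/
structure ClosedManifoldG2 (C : DGCtx) extends G2Data C where
  /-- the wedge product of forms -/
  wedge : ∀ {k l : ℕ}, C.Form k → C.Form l → C.Form (k + l)
  wedge_zero_left : ∀ {k l : ℕ} (β : C.Form l), wedge (0 : C.Form k) β = 0
  wedge_zero_right : ∀ {k l : ℕ} (α : C.Form k), wedge α (0 : C.Form l) = 0
  wedge_assoc₂₂₃ : ∀ (α β : C.Form 2) (γ : C.Form 3),
    wedge (wedge α β) γ = wedge α (wedge β γ)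
  d_wedge₁₅ : ∀ (α : C.Form 1) (β : C.Form 5),
    C.d (wedge α β) = wedge (C.d α) β - wedge α (C.d β)
  d_wedge₂₃ : ∀ (α : C.Form 2) (β : C.Form 3),
    C.d (wedge α β) = wedge (C.d α) β + wedge α (C.d β)
  /-- the `G₂`-metric `⟨X, Y⟩_φ`, as a smooth function -/
  inner : C.VF → C.VF → C.Form 0
  /-- the volume form `dvol_φ` of the `G₂`-metric -/
  vol : C.Form 7
  /-- multiplication of a 7-form by a smooth function -/
  fmul : C.Form 0 → C.Form 7 → C.Form 7
  fmul_smul : ∀ (c : ℝ) (f : C.Form 0) (η : C.Form 7), fmul (c • f) η = c • fmul f η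
  /-- the defining identity of the `G₂`-metric:
  `(X ⌟ φ) ∧ (Y ⌟ φ) ∧ φ = 6 ⟨X,Y⟩_φ dvol_φ` -/
  g2_metric : ∀ X Y : C.VF,
    wedge (wedge (C.ι X φ) (C.ι Y φ)) φ = fmul ((6 : ℝ) • inner X Y) vol
  /-- integration of 7-forms over `M` -/
  integral : C.Form 7 → ℝ
  integral_smul : ∀ (c : ℝ) (η : C.Form 7), integral (c • η) = c * integral η
  /-- Stokes' theorem on the closed manifold `M`: `∫_M dη = 0` -/
  stokes : ∀ η : C.Form 6, integral (C.d η) = 0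
  /-- `∫_M ⟨X,X⟩_φ dvol_φ ≥ 0` (it is `6⁻¹` of the square of the `L²`-norm of `X`) -/
  inner_self_integral_nonneg : ∀ X : C.VF, 0 ≤ integral (fmul (inner X X) vol)
  /-- `∫_M ⟨X,X⟩_φ dvol_φ = 0` forces `X = 0`, by positive-definiteness of the metric -/
  inner_self_integral_eq_zero : ∀ X : C.VF, integral (fmul (inner X X) vol) = 0 → X = 0


/-- Let `M` be a closed (compact, boundaryless) 7-manifold with a closed
`G₂`-structure `φ` and `X` a vector field on `M`.  Then `X ⌟ φ` is exact iff `X = 0`;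
consequently, there are no nontrivial Rochesterian vector fields on a closed manifold with
closed `G₂`-structure. -/
theorem no_rochesterian_on_closed_manifold
    (C : DGCtx) (K : ClosedManifoldG2 C) (hφ : C.d K.φ = 0) :
    (∀ X : C.VF, (∃ α : C.Form 1, C.d α = C.ι X K.φ) ↔ X = 0) ∧
    (∀ X : C.VF, K.toG2Data.IsRocVF X → X = 0) := by
  have hd0 : ∀ k : ℕ, C.d (0 : C.Form k) = 0 := by
    intro k
    have := C.d_smul (0 : ℝ) (0 : C.Form k)
    simpa using this
  have hι0 : ∀ (α : C.Form 3), C.ι (0 : C.VF) α = 0 := by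
    intro α
    have := C.ι_smul_vf (0 : ℝ) (0 : C.VF) α
    simpa using this
  have main : ∀ X : C.VF, (∃ α : C.Form 1, C.d α = C.ι X K.φ) ↔ X = 0 := by
    intro X
    constructor
    · rintro ⟨α, hα⟩
      -- β := (X ⌟ φ) ∧ φ is closed
      set β : C.Form 5 := K.wedge (C.ι X K.φ) K.φ with hβ
      have hdβ : C.d β = 0 := by
        have h1 : C.d (C.ι X K.φ) = 0 := by
          rw [← hα, C.d_d]
        rw [hβ, K.d_wedge₂₃, h1, hφ, K.wedge_zero_left, K.wedge_zero_right, add_zero]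
      -- integral of (X⌟φ)∧(X⌟φ)∧φ is 0
      have hint : K.integral (K.wedge (K.wedge (C.ι X K.φ) (C.ι X K.φ)) K.φ) = 0 := by
        rw [K.wedge_assoc₂₂₃, ← hβ, ← hα]
        have : K.wedge (C.d α) β = C.d (K.wedge α β) := by
          rw [K.d_wedge₁₅, hdβ, K.wedge_zero_right, sub_zero]
        rw [this, K.stokes]
      rw [K.g2_metric, K.fmul_smul] at hint
      rw [K.integral_smul] at hint
      have h6 : K.integral (K.fmul (K.inner X X) K.vol) = 0 := by
        have : (6 : ℝ) ≠ 0 := by norm_num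
        exact (mul_eq_zero.mp hint).resolve_left this
      exact K.inner_self_integral_eq_zero X h6
    · rintro rfl
      exact ⟨0, by rw [hd0, hι0]⟩
  refine ⟨main, fun X hX => ?_⟩
  obtain ⟨α, hα⟩ := hX
  exact (main X).mp ⟨α, hα.symm⟩
end

section
/- Let (M, φ) be a 7-manifold with closed G₂-structure. Then every Rochesterian vector field on M is a G₂-vector field. Moreover, if every closed 2-form in Ω²₇(M) is exact, then the space 𝔛_Roc(M) of Rochesterian vector fields and the space 𝔛_{G₂}(M) of G₂-vector fields coincide. -/
/-- Let `(M, φ)` be a 7-manifold with closed `G₂`-structure.  Every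
Rochesterian vector field on `M` is a `G₂`-vector field; moreover, if every closed 2-form
in `Ω²₇(M)` is exact, then the spaces `𝔛_Roc(M)` and `𝔛_{G₂}(M)` coincide. -/
theorem rochesterian_subset_g2_and_coincide
    (C : DGCtx) (G : G2Data C) (hφ : C.d G.φ = 0) :
    (∀ X : C.VF, G.IsRocVF X → G.IsG2VF X) ∧
    ((∀ β : C.Form 2, β ∈ G.Omega27 → C.d β = 0 → ∃ α : C.Form 1, C.d α = β) →
      {X : C.VF | G.IsRocVF X} = {X : C.VF | G.IsG2VF X}) := by
  have ι_zero : ∀ {k : ℕ} (X : C.VF), C.ι (k := k) X 0 = 0 := by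
    intro k X
    have h := C.ι_add X (0 : C.Form (k+1)) 0
    rw [add_zero] at h
    exact add_eq_right.mp h.symm
  have hroc : ∀ X : C.VF, G.IsRocVF X → G.IsG2VF X := by
    rintro X ⟨α, hα⟩
    unfold G2Data.IsG2VF DGCtx.lieD
    rw [hα, C.d_d, hφ, ι_zero, add_zero]
  refine ⟨hroc, fun hex => ?_⟩
  ext X
  simp only [Set.mem_setOf_eq]
  refine ⟨hroc X, fun hg2 => ?_⟩
  have hclosed : C.d (C.ι X G.φ) = 0 := by
    have := hg2
    unfold G2Data.IsG2VF DGCtx.lieD at this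
    rwa [hφ, ι_zero, add_zero] at this
  obtain ⟨α, hα⟩ := hex (C.ι X G.φ) ⟨X, rfl⟩ hclosed
  exact ⟨α, hα.symm⟩
end

section
/- Let (M, φ) be a 7-manifold with closed G₂-structure. For any two G₂-vector fields X₁, X₂ on M, the Lie bracket satisfies [X₁, X₂] ⌟ φ = d(φ(X₂, X₁, ·)); hence [X₁, X₂] is a Rochesterian vector field with associated Rochesterian 1-form φ(X₂, X₁, ·). -/
/-- Let `(M, φ)` be a 7-manifold with closed `G₂`-structure.  For any
`G₂`-vector fields `X₁, X₂`, the Lie bracket satisfies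
`[X₁, X₂] ⌟ φ = d(φ(X₂, X₁, ·))` (note `φ(X₂, X₁, ·) = ι_{X₁} ι_{X₂} φ`); hence
`[X₁, X₂]` is a Rochesterian vector field with associated Rochesterian 1-form
`φ(X₂, X₁, ·)`. -/
theorem bracket_of_g2_is_rochesterian
    (C : DGCtx) (G : G2Data C) (hφ : C.d G.φ = 0) (X₁ X₂ : C.VF)
    (h₁ : G.IsG2VF X₁) (h₂ : G.IsG2VF X₂) :
    C.ι ⁅X₁, X₂⁆ G.φ = C.d (C.ι X₁ (C.ι X₂ G.φ)) ∧ G.IsRocVF ⁅X₁, X₂⁆ := by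
  have hz : ∀ (k : ℕ) (X : C.VF), C.ι X (0 : C.Form (k + 1)) = 0 := fun k X => by
    simpa using C.ι_smul (k := k) 0 X 0
  have key : C.ι ⁅X₁, X₂⁆ G.φ = C.d (C.ι X₁ (C.ι X₂ G.φ)) := by
    have e := C.ι_bracket (k := 1) X₁ X₂ G.φ
    unfold G2Data.IsG2VF DGCtx.lieD at h₁ h₂
    rw [hφ, hz 3 X₁, add_zero] at h₁
    rw [hφ, hz 3 X₂, add_zero] at h₂
    rw [e, hφ, h₁, h₂]; simp [hz]
  exact ⟨key, ⟨C.ι X₁ (C.ι X₂ G.φ), key⟩⟩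
end

section
/- Let (M, φ) be a 7-manifold with closed G₂-structure. The spaces 𝔛_Roc(M) of Rochesterian vector fields and 𝔛_{G₂}(M) of G₂-vector fields are closed under the Lie bracket of vector fields, giving inclusions of Lie algebras (𝔛_Roc(M), [·,·]) ⊆ (𝔛_{G₂}(M), [·,·]) ⊆ (𝔛(M), [·,·]). -/
lemma DGCtx.ι_zero (C : DGCtx) {k : ℕ} (X : C.VF) : C.ι X (0 : C.Form (k+1)) = 0 := by
  have := C.ι_smul (0 : ℝ) X (0 : C.Form (k+1))
  simpa using this

/-- Let `(M, φ)` be a 7-manifold with closed `G₂`-structure.  The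
Rochesterian vector fields and the `G₂`-vector fields are closed under the Lie bracket of
vector fields, and every Rochesterian vector field is a `G₂`-vector field; hence there are
inclusions of Lie algebras `𝔛_Roc(M) ⊆ 𝔛_{G₂}(M) ⊆ 𝔛(M)`. -/
theorem rochesterian_g2_lie_subalgebras
    (C : DGCtx) (G : G2Data C) (hφ : C.d G.φ = 0) :
    (∀ X Y : C.VF, G.IsRocVF X → G.IsRocVF Y → G.IsRocVF ⁅X, Y⁆) ∧
    (∀ X Y : C.VF, G.IsG2VF X → G.IsG2VF Y → G.IsG2VF ⁅X, Y⁆) ∧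
    (∀ X : C.VF, G.IsRocVF X → G.IsG2VF X) := by
  have ιz : ∀ {k : ℕ} (X : C.VF), C.ι X (0 : C.Form (k+1)) = 0 := fun X => C.ι_zero X
  have key : ∀ X Y : C.VF, C.d (C.ι X G.φ) = 0 → C.d (C.ι Y G.φ) = 0 →
      C.ι ⁅X, Y⁆ G.φ = C.d (C.ι X (C.ι Y G.φ)) := by
    intro X Y hX hY
    rw [C.ι_bracket X Y G.φ, hφ, hX, hY]
    simp [ιz]
  refine ⟨?_, ?_, ?_⟩
  · rintro X Y ⟨α, hα⟩ ⟨β, hβ⟩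
    exact ⟨C.ι X (C.ι Y G.φ), key X Y (by rw [hα, C.d_d]) (by rw [hβ, C.d_d])⟩
  · intro X Y hX hY
    have hX' : C.d (C.ι X G.φ) = 0 := by
      have := hX; unfold G2Data.IsG2VF DGCtx.lieD at this
      rw [hφ, ιz, add_zero] at this; exact this
    have hY' : C.d (C.ι Y G.φ) = 0 := by
      have := hY; unfold G2Data.IsG2VF DGCtx.lieD at this
      rw [hφ, ιz, add_zero] at this; exact this
    unfold G2Data.IsG2VF DGCtx.lieD
    rw [hφ, ιz, add_zero, key X Y hX' hY', C.d_d]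
  · rintro X ⟨α, hα⟩
    unfold G2Data.IsG2VF DGCtx.lieD
    rw [hφ, ιz, add_zero, hα, C.d_d]
end

section
/- Let (M, φ) be a 7-manifold with closed G₂-structure and let α, β be Rochesterian 1-forms with Rochesterian vector fields X_α, X_β. Then the bracket {α, β} := φ(X_α, X_β, ·) is again a Rochesterian 1-form, and its Rochesterian vector field is [X_β, X_α]; that is, d({α, β}) = [X_β, X_α] ⌟ φ. -/
lemma rvf_spec' {C : DGCtx} (G : G2Data C) (α : C.Form 1)
    (h : ∃ X : C.VF, C.ι X G.φ = C.d α) : C.ι (G.rvf α) G.φ = C.d α := by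
  unfold G2Data.rvf
  rw [dif_pos h]
  exact h.choose_spec

/-- Let `(M, φ)` be a 7-manifold with closed `G₂`-structure and `α, β`
Rochesterian 1-forms with Rochesterian vector fields `X_α, X_β`.  Then the bracket
`{α, β} = φ(X_α, X_β, ·)` is again a Rochesterian 1-form, and its Rochesterian vector
field is `[X_β, X_α]`; that is, `d({α, β}) = [X_β, X_α] ⌟ φ`. -/
theorem rochesterian_bracket_is_rochesterian
    (C : DGCtx) (G : G2Data C) (hφ : C.d G.φ = 0)
    (α β : C.Form 1) (hα : G.IsRoc1 α) (hβ : G.IsRoc1 β) :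
    G.IsRoc1 (G.rbr α β) ∧
    C.d (G.rbr α β) = C.ι ⁅G.rvf β, G.rvf α⁆ G.φ ∧
    G.rvf (G.rbr α β) = ⁅G.rvf β, G.rvf α⁆ := by
  obtain ⟨Xa, hXa⟩ := hα
  obtain ⟨Xb, hXb⟩ := hβ
  have ha : C.ι (G.rvf α) G.φ = C.d α := rvf_spec' G α ⟨Xa, hXa⟩
  have hb : C.ι (G.rvf β) G.φ = C.d β := rvf_spec' G β ⟨Xb, hXb⟩
  have key : C.d (G.rbr α β) = C.ι ⁅G.rvf β, G.rvf α⁆ G.φ := by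
    rw [C.ι_bracket (G.rvf β) (G.rvf α) G.φ, ha, hb, hφ, C.d_d, C.d_d]
    simp only [G2Data.rbr]
    have h1 : C.ι (G.rvf β) (0 : C.Form 3) = 0 := by
      have := C.ι_smul (0 : ℝ) (G.rvf β) (0 : C.Form 3)
      simpa using this
    have h2 : C.ι (G.rvf α) (0 : C.Form 2) = 0 := by
      have := C.ι_smul (0 : ℝ) (G.rvf α) (0 : C.Form 2)
      simpa using this
    have h3 : C.ι (G.rvf β) (0 : C.Form 4) = 0 := by
      have := C.ι_smul (0 : ℝ) (G.rvf β) (0 : C.Form 4)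
      simpa using this
    have h4 : C.ι (G.rvf α) (0 : C.Form 3) = 0 := by
      have := C.ι_smul (0 : ℝ) (G.rvf α) (0 : C.Form 3)
      simpa using this
    rw [h1, h3, zero_add, h4, ← ha]
    abel
  have hex : ∃ X : C.VF, C.ι X G.φ = C.d (G.rbr α β) := ⟨_, key.symm⟩
  refine ⟨⟨_, key.symm⟩, key, ?_⟩
  exact G.nondeg _ _ (by rw [rvf_spec' G _ hex, key])
end

section
/- Let (M, φ) be a 7-manifold with closed G₂-structure and α₁, α₂ Rochesterian 1-forms. Then {α₁, α₂} lies in the kernel of the map Φ : α ↦ X_α (equivalently, {α₁, α₂} is closed) if and only if dα₁ is constant along the flow lines of X_{α₂} (i.e., L_{X_{α₂}}(dα₁) = 0), if and only if dα₂ is constant along the flow lines of X_{α₁} (i.e., L_{X_{α₁}}(dα₂) = 0). -/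
namespace ProofAux

variable {C : DGCtx}

lemma iota_zero_vf {k : ℕ} (α : C.Form (k + 1)) : C.ι (0 : C.VF) α = 0 := by
  have h := C.ι_smul_vf (0 : ℝ) 0 α
  simpa using h

lemma iota_zero {k : ℕ} (X : C.VF) : C.ι X (0 : C.Form (k + 1)) = 0 := by
  have h := C.ι_smul (0 : ℝ) X (0 : C.Form (k + 1))
  simpa using h

lemma d_neg {k : ℕ} (β : C.Form k) : C.d (-β) = -C.d β := by
  have h := C.d_smul (-1 : ℝ) β
  simpa using h

lemma rvf_spec (G : G2Data C) (β : C.Form 1)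
    (h : ∃ X : C.VF, C.ι X G.φ = C.d β) : C.ι (G.rvf β) G.φ = C.d β := by
  unfold G2Data.rvf
  rw [dif_pos h]
  exact h.choose_spec

end ProofAux

open ProofAux

/-- Let `(M, φ)` be a 7-manifold with closed `G₂`-structure and `α₁, α₂`
Rochesterian 1-forms.  Then `{α₁, α₂}` lies in the kernel of `Φ : α ↦ X_α` (equivalently,
`{α₁, α₂}` is closed) iff `dα₁` is constant along the flow lines of `X_{α₂}`
(`L_{X_{α₂}}(dα₁) = 0`), iff `dα₂` is constant along the flow lines of `X_{α₁}`
(`L_{X_{α₁}}(dα₂) = 0`). -/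
theorem rochesterian_bracket_in_kernel_iff
    (C : DGCtx) (G : G2Data C) (hφ : C.d G.φ = 0)
    (α₁ α₂ : C.Form 1) (h₁ : G.IsRoc1 α₁) (h₂ : G.IsRoc1 α₂) :
    (G.rvf (G.rbr α₁ α₂) = 0 ↔ C.d (G.rbr α₁ α₂) = 0) ∧
    (G.rvf (G.rbr α₁ α₂) = 0 ↔ C.lieD (k := 1) (G.rvf α₂) (C.d α₁) = 0) ∧
    (G.rvf (G.rbr α₁ α₂) = 0 ↔ C.lieD (k := 1) (G.rvf α₁) (C.d α₂) = 0) := by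
  classical
  obtain ⟨Y₁, hY₁⟩ := h₁
  obtain ⟨Y₂, hY₂⟩ := h₂
  have hX₁ : C.ι (G.rvf α₁) G.φ = C.d α₁ := rvf_spec G α₁ ⟨Y₁, hY₁⟩
  have hX₂ : C.ι (G.rvf α₂) G.φ = C.d α₂ := rvf_spec G α₂ ⟨Y₂, hY₂⟩
  set X₁ := G.rvf α₁
  set X₂ := G.rvf α₂
  -- the bracket is Rochesterian with vector field ⁅X₂, X₁⁆
  have hbr : C.ι ⁅X₂, X₁⁆ G.φ = C.d (G.rbr α₁ α₂) := by
    have h := C.ι_bracket (k := 1) X₂ X₁ G.φ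
    rw [hφ, hX₁, hX₂, C.d_d, C.d_d, iota_zero, iota_zero] at h
    simp only [G2Data.rbr]
    rw [show G.rvf α₁ = X₁ from rfl, show G.rvf α₂ = X₂ from rfl, hX₁]
    simpa [iota_zero] using h
  have hR : C.ι (G.rvf (G.rbr α₁ α₂)) G.φ = C.d (G.rbr α₁ α₂) :=
    rvf_spec G _ ⟨⁅X₂, X₁⁆, hbr⟩
  -- first equivalence
  have key : G.rvf (G.rbr α₁ α₂) = 0 ↔ C.d (G.rbr α₁ α₂) = 0 := by
    constructor
    · intro h
      rw [← hR, h, iota_zero_vf]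
    · intro h
      refine G.nondeg _ 0 ?_
      rw [hR, h, iota_zero_vf]
  refine ⟨key, ?_, ?_⟩
  · -- L_{X₂}(dα₁) = d(rbr)
    have : C.lieD (k := 1) X₂ (C.d α₁) = C.d (G.rbr α₁ α₂) := by
      unfold DGCtx.lieD
      rw [C.d_d, iota_zero, add_zero]
      congr 1
      simp [G2Data.rbr, hX₁]
      rw [← hX₁]
    rw [key, this]
  · -- L_{X₁}(dα₂) = -d(rbr)
    have : C.lieD (k := 1) X₁ (C.d α₂) = -C.d (G.rbr α₁ α₂) := by
      unfold DGCtx.lieD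
      rw [C.d_d, iota_zero, add_zero, ← d_neg]
      congr 1
      rw [← hX₂, C.ι_antisymm]
      simp [G2Data.rbr, hX₁]
      rw [← hX₁]
    rw [key, this, neg_eq_zero]
end
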